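/- arXiv:1212.1441 — 2 statements merged into one kernel-verified Lean document; each statement's English description precedes it below -/
import Mathlib

section
/- Along any finite sequence of atomic bookkeeping moves, the number of odd vertices never decreases. Precisely: define a relation Move on finite multisets of natural numbers by: Move s t holds if and only if there exists an element n of s such that either (split) t = (s.erase n) + m for some finite multiset m of natural numbers with sum n, or (create) t = (s.erase n) + {a+1, b+1} for some natural numbers a, b with a + b = n, or (lose) n ≥ 2 and t = (s.erase n) + {n - 2}. Then whenever t is obtained from s by the reflexive-transitive closure of Move, the number of odd elements of t (counted with multiplicity) is at least the number of odd elements of s (counted with multiplicity). -/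
/-- The atomic bookkeeping moves on multisets of invalid-edge counts:
(split) replace an element `n` by a multiset `m` with sum `n`;
(create) replace an element `n = a + b` by the two elements `a + 1`, `b + 1`;
(lose) replace an element `n ≥ 2` by `n - 2`. -/
def Move (s t : Multiset ℕ) : Prop :=
  ∃ n ∈ s,
    (∃ m : Multiset ℕ, m.sum = n ∧ t = s.erase n + m) ∨
    (∃ a b : ℕ, a + b = n ∧ t = s.erase n + {a + 1, b + 1}) ∨
    (2 ≤ n ∧ t = s.erase n + {n - 2})

private lemma exists_odd_of_odd_sum (m : Multiset ℕ) (h : Odd m.sum) :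
    1 ≤ m.countP (fun k => Odd k) := by
  induction m using Multiset.induction with
  | empty => simp at h
  | cons a m ih =>
    rw [Multiset.countP_cons]
    by_cases ha : Odd a
    · simp [ha]
    · rw [Multiset.sum_cons] at h
      have ha' : a % 2 = 0 := by
        rcases Nat.even_or_odd a with he | ho
        · exact Nat.even_iff.mp he
        · exact absurd ho ha
      have : Odd m.sum := by
        have := Nat.odd_iff.mp h
        exact Nat.odd_iff.mpr (by omega)
      have := ih this
      simpa [ha]

private lemma countP_split (s : Multiset ℕ) (n : ℕ) (hn : n ∈ s) :
    s.countP (fun k => Odd k) =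
      (s.erase n).countP (fun k => Odd k) + if Odd n then 1 else 0 := by
  conv_lhs => rw [← Multiset.cons_erase hn]
  rw [Multiset.countP_cons]

private lemma move_step (s t : Multiset ℕ) (h : Move s t) :
    s.countP (fun k => Odd k) ≤ t.countP (fun k => Odd k) := by
  obtain ⟨n, hn, hcase⟩ := h
  rw [countP_split s n hn]
  rcases hcase with ⟨m, hm, ht⟩ | ⟨a, b, hab, ht⟩ | ⟨h2, ht⟩
  · rw [ht, Multiset.countP_add]
    by_cases hodd : Odd n
    · have := exists_odd_of_odd_sum m (hm ▸ hodd)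
      simp only [hodd, if_true]; omega
    · simp [hodd]
  · rw [ht, Multiset.countP_add]
    by_cases hodd : Odd n
    · have h1 : 1 ≤ ({a + 1, b + 1} : Multiset ℕ).countP (fun k => Odd k) := by
        have hpar : Odd (a + 1) ∨ Odd (b + 1) := by
          have := Nat.odd_iff.mp (hab ▸ hodd)
          rcases Nat.even_or_odd a with he | ho
          · have := Nat.even_iff.mp he
            exact Or.inl (Nat.odd_iff.mpr (by omega))
          · have hb : b % 2 = 0 := by have := Nat.odd_iff.mp ho; omega
            exact Or.inr (Nat.odd_iff.mpr (by omega))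
        have hsing : ∀ x : ℕ, ({x} : Multiset ℕ).countP (fun k => Odd k)
            = if Odd x then 1 else 0 := by
          intro x
          rw [show ({x} : Multiset ℕ) = x ::ₘ 0 from rfl,
            Multiset.countP_cons, Multiset.countP_zero, Nat.zero_add]
        rcases hpar with h | h
        · simp [Multiset.insert_eq_cons, Multiset.countP_cons, hsing, h]
        · simp only [Multiset.insert_eq_cons, Multiset.countP_cons, hsing, h,
            if_true]
          omega
      simp only [hodd, if_true]; omega
    · simp [hodd]
  · rw [ht, Multiset.countP_add]
    have hpar : Odd (n - 2) ↔ Odd n := by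
      rw [Nat.odd_iff, Nat.odd_iff]; omega
    have hsing : ({n - 2} : Multiset ℕ).countP (fun k => Odd k)
        = if Odd (n - 2) then 1 else 0 := by
      rw [show ({n - 2} : Multiset ℕ) = (n - 2) ::ₘ 0 from rfl,
        Multiset.countP_cons, Multiset.countP_zero, Nat.zero_add]
    by_cases hodd : Odd n
    · have : Odd (n - 2) := hpar.mpr hodd
      simp [hodd, this, hsing]
    · have : ¬ Odd (n - 2) := fun h => hodd (hpar.mp h)
      simp [hodd, this, hsing]

/-- Along any finite sequence of atomic bookkeeping moves, the number of odd
elements (counted with multiplicity) never decreases. -/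
theorem odd_count_mono_of_reflTransGen_move (s t : Multiset ℕ)
    (h : Relation.ReflTransGen Move s t) :
    s.countP (fun k => Odd k) ≤ t.countP (fun k => Odd k) := by
  induction h with
  | refl => exact le_refl _
  | tail _ hmove ih => exact le_trans ih (move_step _ _ hmove)
end

section
/- Odd vertices persist to the end of the crushing process. Precisely: define a relation Move on finite multisets of natural numbers by: Move s t holds if and only if there exists an element n of s such that either (split) t = (s.erase n) + m for some finite multiset m of natural numbers with sum n, or (create) t = (s.erase n) + {a+1, b+1} for some natural numbers a, b with a + b = n, or (lose) n ≥ 2 and t = (s.erase n) + {n - 2}. If t is obtained from s by the reflexive-transitive closure of Move and s contains at least one odd element, then t contains at least one odd element. -/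
/-- If a multiset of naturals has odd sum, it contains an odd element. -/
lemma exists_odd_of_odd_sum_s4 (m : Multiset ℕ) (h : Odd m.sum) : ∃ x ∈ m, Odd x := by
  induction m using Multiset.induction with
  | empty => simp at h
  | cons a m ih =>
    rw [Multiset.sum_cons] at h
    rcases Nat.even_or_odd a with ha | ha
    · obtain ⟨x, hx, hxodd⟩ := ih (by
        rcases Nat.even_or_odd m.sum with hm | hm
        · exact absurd (ha.add hm) (Nat.not_even_iff_odd.2 h)
        · exact hm)
      exact ⟨x, Multiset.mem_cons_of_mem hx, hxodd⟩
    · exact ⟨a, Multiset.mem_cons_self a m, ha⟩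

/-- One atomic move preserves the existence of an odd element. -/
lemma move_preserves_odd {s t : Multiset ℕ} (h : Move s t) (hs : ∃ n ∈ s, Odd n) :
    ∃ n ∈ t, Odd n := by
  obtain ⟨n, hn, hcase⟩ := h
  obtain ⟨w, hw, hwodd⟩ := hs
  by_cases hwe : w ∈ s.erase n
  · -- the odd witness survives in `s.erase n ≤ t` in every case
    rcases hcase with ⟨m, _, ht⟩ | ⟨a, b, _, ht⟩ | ⟨_, ht⟩ <;>
      exact ⟨w, by rw [ht]; exact Multiset.mem_add.2 (Or.inl hwe), hwodd⟩
  · have hwn : w = n := by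
      by_contra hne
      exact hwe ((Multiset.mem_erase_of_ne hne).2 hw)
    subst hwn
    rcases hcase with ⟨m, hsum, ht⟩ | ⟨a, b, hab, ht⟩ | ⟨h2, ht⟩
    · obtain ⟨x, hx, hxodd⟩ := exists_odd_of_odd_sum_s4 m (hsum ▸ hwodd)
      exact ⟨x, by rw [ht]; exact Multiset.mem_add.2 (Or.inr hx), hxodd⟩
    · rcases Nat.even_or_odd a with ha | ha
      · refine ⟨a + 1, ?_, ha.add_one⟩
        rw [ht]
        refine Multiset.mem_add.2 (Or.inr ?_)
        simp
      · have hb : Even b := by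
          rcases Nat.even_or_odd b with hb | hb
          · exact hb
          · exact absurd (hab ▸ ha.add_odd hb) (Nat.not_even_iff_odd.2 hwodd)
        refine ⟨b + 1, ?_, hb.add_one⟩
        rw [ht]
        refine Multiset.mem_add.2 (Or.inr ?_)
        simp
    · refine ⟨w - 2, ?_, ?_⟩
      · rw [ht]; exact Multiset.mem_add.2 (Or.inr (by simp))
      · obtain ⟨k, hk⟩ := hwodd
        exact ⟨k - 1, by omega⟩

/-- Odd vertices persist to the end of the crushing process: if `t` is obtained
from `s` by a finite sequence of atomic bookkeeping moves and `s` contains an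
odd element, then `t` contains an odd element. -/
theorem odd_persists_of_reflTransGen_move (s t : Multiset ℕ)
    (h : Relation.ReflTransGen Move s t) (hs : ∃ n ∈ s, Odd n) :
    ∃ n ∈ t, Odd n := by
  induction h with
  | refl => exact hs
  | tail _ hmove ih => exact move_preserves_odd hmove ih
end
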